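/- arXiv:0806.3831 — 9 statements merged into one kernel-verified Lean document; each statement's English description precedes it below -/
import Mathlib

section
/- A curvature-like (0,4)-tensor L on a vector space V with a hypercomplex structure (J₁,J₂,J₃) satisfying the Kähler-like conditions L(x,y,z,w) = εα L(x,y,Jα z, Jα w) = εα L(Jα x, Jα y, z, w) for all α = 1,2,3 (where ε₁=1, ε₂=ε₃=-1) also satisfies L(x,y,z,w) = εα L(x, Jα y, Jα z, w) for all α. -/
section Aux

variable {V : Type*} [AddCommGroup V] [Module ℝ V]

private lemma pairSym (L : V →ₗ[ℝ] V →ₗ[ℝ] V →ₗ[ℝ] V →ₗ[ℝ] ℝ)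
    (ha1 : ∀ x y z w, L x y z w = -L y x z w)
    (ha2 : ∀ x y z w, L x y z w = -L x y w z)
    (hB : ∀ x y z w, L x y z w + L y z x w + L z x y w = 0) :
    ∀ x y z w, L x y z w = L z w x y := by
  intro x y z w
  have b1 := hB x y z w
  have b2 := hB y z w x
  have b3 := hB z w x y
  have b4 := hB w x y z
  linarith [ha2 y z x w, ha2 z w x y, ha1 w y z x, ha1 w x z y, ha2 x w z y,
    ha1 x z w y, ha2 z x y w, ha1 w x y z, ha2 x y z w, ha2 y w z x]

private lemma keyNeg (L : V →ₗ[ℝ] V →ₗ[ℝ] V →ₗ[ℝ] V →ₗ[ℝ] ℝ) (J : V →ₗ[ℝ] V)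
    (hsq : ∀ v, J (J v) = -v)
    (ha1 : ∀ x y z w, L x y z w = -L y x z w)
    (ha2 : ∀ x y z w, L x y z w = -L x y w z)
    (hB : ∀ x y z w, L x y z w + L y z x w + L z x y w = 0)
    (hpair : ∀ x y z w, L x y z w = L z w x y)
    (hKa : ∀ x y z w, L x y z w = -L x y (J z) (J w))
    (hKb : ∀ x y z w, L x y z w = -L (J x) (J y) z w) :
    ∀ x y z w, L x y z w = -L x (J y) (J z) w := by
  -- P = G : L a (J b) c (J d) = L a (J b) (J c) d
  have hPG : ∀ a b c d, L a (J b) c (J d) = L a (J b) (J c) d := by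
    intro a b c d
    have h := hKa a (J b) (J c) d
    rw [hsq c] at h
    simp only [map_neg, LinearMap.neg_apply] at h
    linarith
  -- R1 : G(x,y,z,w) = L(y,z,x,w) + G(x,z,y,w)
  have R1 : ∀ x y z w, L x (J y) (J z) w = L y z x w + L x (J z) (J y) w := by
    intro x y z w
    have b := hB x (J y) (J z) w
    have h1 := hKb y z x w
    have h2 := ha1 (J z) x (J y) w
    linarith
  -- R3 : G(x,y,z,w) = -G(x,y,w,z)
  have R3 : ∀ x y z w, L x (J y) (J z) w = -L x (J y) (J w) z := by
    intro x y z w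
    have h1 := ha2 x (J y) (J z) w
    have h2 := hPG x y w z
    linarith
  -- R2 : L a (J b) (J c) d = L a (J d) (J c) b - L a c b d
  have R2 : ∀ a b c d, L a (J b) (J c) d = L a (J d) (J c) b - L a c b d := by
    intro a b c d
    have b0 := hB (J b) a c (J d)
    have h1 := hKa a c b d        -- L a c b d = -L a c (J b) (J d)
    have h2 := hpair c (J b) a (J d)  -- L c (J b) a (J d) = L a (J d) c (J b)
    have h3 := hPG a d c b        -- L a (J d) c (J b) = L a (J d) (J c) b
    have h4 := ha1 (J b) a c (J d)    -- L (J b) a c (J d) = -L a (J b) c (J d)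
    have h5 := hPG a b c d        -- L a (J b) c (J d) = L a (J b) (J c) d
    linarith
  intro x y z w
  have E1 := R2 x y z w   -- G(x,y,z,w) = G(x,w,z,y) - L x z y w
  have E2 := R3 x w z y   -- G(x,w,z,y) = -G(x,w,y,z)
  have E3 := R2 x w y z   -- G(x,w,y,z) = G(x,z,y,w) - L x y w z
  have E4 := R1 x z y w   -- G(x,z,y,w) = L z y x w + G(x,y,z,w)
  have b := hB x z y w    -- L x z y w + L z y x w + L y x z w = 0
  have h1 := ha1 y x z w
  have h2 := ha2 x y w z
  linarith

end Aux

theorem stmt_2 (V : Type*) [AddCommGroup V] [Module ℝ V]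
    (J1 J2 J3 : V →ₗ[ℝ] V)
    (L : V →ₗ[ℝ] V →ₗ[ℝ] V →ₗ[ℝ] V →ₗ[ℝ] ℝ)
    (h1sq : ∀ v, J1 (J1 v) = -v) (h2sq : ∀ v, J2 (J2 v) = -v) (h3sq : ∀ v, J3 (J3 v) = -v)
    (h23 : ∀ v, J2 (J3 v) = J1 v) (h32 : ∀ v, J3 (J2 v) = -J1 v)
    (h31 : ∀ v, J3 (J1 v) = J2 v) (h13 : ∀ v, J1 (J3 v) = -J2 v)
    (h12 : ∀ v, J1 (J2 v) = J3 v) (h21 : ∀ v, J2 (J1 v) = -J3 v)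
    (ha1 : ∀ x y z w, L x y z w = -L y x z w)
    (ha2 : ∀ x y z w, L x y z w = -L x y w z)
    (hBianchi : ∀ x y z w, L x y z w + L y z x w + L z x y w = 0)
    (hK1a : ∀ x y z w, L x y z w = L x y (J1 z) (J1 w))
    (hK1b : ∀ x y z w, L x y z w = L (J1 x) (J1 y) z w)
    (hK2a : ∀ x y z w, L x y z w = -L x y (J2 z) (J2 w))
    (hK2b : ∀ x y z w, L x y z w = -L (J2 x) (J2 y) z w)
    (hK3a : ∀ x y z w, L x y z w = -L x y (J3 z) (J3 w))
    (hK3b : ∀ x y z w, L x y z w = -L (J3 x) (J3 y) z w) :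
    (∀ x y z w, L x y z w = L x (J1 y) (J1 z) w) ∧
    (∀ x y z w, L x y z w = -L x (J2 y) (J2 z) w) ∧
    (∀ x y z w, L x y z w = -L x (J3 y) (J3 z) w) := by
  have hpair := pairSym L ha1 ha2 hBianchi
  have k2 := keyNeg L J2 h2sq ha1 ha2 hBianchi hpair hK2a hK2b
  have k3 := keyNeg L J3 h3sq ha1 ha2 hBianchi hpair hK3a hK3b
  refine ⟨?_, k2, k3⟩
  intro x y z w
  have e1 : J1 y = J2 (J3 y) := (h23 y).symm
  have e2 : J1 z = J2 (J3 z) := (h23 z).symm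
  rw [e1, e2]
  have g1 := k2 x (J3 y) (J3 z) w
  have g2 := k3 x y z w
  linarith
end

section
/- Every Kähler-like tensor on an almost (H,G)-manifold is zero. That is, if L is a (0,4)-tensor on a vector space with hypercomplex structure (J₁,J₂,J₃) which is curvature-like (antisymmetric in the first pair, antisymmetric in the second pair, satisfying the first Bianchi identity) and satisfies L(x,y,z,w) = εα L(x,y,Jα z, Jα w) = εα L(Jα x, Jα y,z,w) for all α = 1,2,3 with ε₁ = 1, ε₂ = ε₃ = -1, then L = 0. -/
private lemma aux_neg_K (V : Type*) [AddCommGroup V] [Module ℝ V]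
    (J : V →ₗ[ℝ] V)
    (L : V →ₗ[ℝ] V →ₗ[ℝ] V →ₗ[ℝ] V →ₗ[ℝ] ℝ)
    (hsq : ∀ v, J (J v) = -v)
    (ha2 : ∀ x y z w, L x y z w = -L x y w z)
    (hBianchi : ∀ x y z w, L x y z w + L y z x w + L z x y w = 0)
    (hKa : ∀ x y z w, L x y z w = -L x y (J z) (J w))
    (hKb : ∀ x y z w, L x y z w = -L (J x) (J y) z w) :
    ∀ x y z w, L (J x) y (J z) w = -L x y z w := by
  have n1 : ∀ a b c d, L (-a) b c d = -L a b c d := by intro a b c d; have h := congrArg (fun f => f b c d) (L.map_add (-a) a); simp only [neg_add_cancel, map_zero, LinearMap.add_apply, LinearMap.zero_apply] at h; linarith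
  have n3 : ∀ a b c d, L a b (-c) d = -L a b c d := by intro a b c d; simp
  -- swap rules
  have s1 : ∀ a b c d, L (J a) b c d = L a (J b) c d := by
    intro a b c d
    have h := hKb (J a) b c d
    rw [hsq, n1] at h
    linarith
  have s2 : ∀ a b c d, L a b (J c) d = L a b c (J d) := by
    intro a b c d
    have h := hKa a b (J c) d
    rw [hsq, n3] at h
    linarith
  -- moving a single J across the last pair of slots
  have KK' : ∀ x y z w, L (J x) y z (J w) = L (J x) y (J z) w := by
    intro x y z w
    have h1 := ha2 (J x) y (J w) z
    have h2 := s2 (J x) y w z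
    have h3 := ha2 (J x) y w (J z)
    linarith
  intro x y z w
  have e1 := hBianchi (J x) y (J z) w
  have e1' := s1 y z (J x) w
  have e1'' := hKb z x y w
  have e2 := hBianchi (J x) (J y) z w
  have e2a := hKb x y z w
  have e2b := s1 z x (J y) w
  have e3 := hBianchi (J x) y z (J w)
  have e3a := KK' x y z w
  have e3b := hKa y z x w
  have e3c := s1 z x y (J w)
  have e3d := KK' z x y w
  have e3e := s1 z x (J y) w
  have eB := hBianchi x y z w
  linarith

theorem stmt_4 (V : Type*) [AddCommGroup V] [Module ℝ V]
    (J1 J2 J3 : V →ₗ[ℝ] V)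
    (L : V →ₗ[ℝ] V →ₗ[ℝ] V →ₗ[ℝ] V →ₗ[ℝ] ℝ)
    (h1sq : ∀ v, J1 (J1 v) = -v) (h2sq : ∀ v, J2 (J2 v) = -v) (h3sq : ∀ v, J3 (J3 v) = -v)
    (h23 : ∀ v, J2 (J3 v) = J1 v) (h32 : ∀ v, J3 (J2 v) = -J1 v)
    (h31 : ∀ v, J3 (J1 v) = J2 v) (h13 : ∀ v, J1 (J3 v) = -J2 v)
    (h12 : ∀ v, J1 (J2 v) = J3 v) (h21 : ∀ v, J2 (J1 v) = -J3 v)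
    (ha1 : ∀ x y z w, L x y z w = -L y x z w)
    (ha2 : ∀ x y z w, L x y z w = -L x y w z)
    (hBianchi : ∀ x y z w, L x y z w + L y z x w + L z x y w = 0)
    (hK1a : ∀ x y z w, L x y z w = L x y (J1 z) (J1 w))
    (hK1b : ∀ x y z w, L x y z w = L (J1 x) (J1 y) z w)
    (hK2a : ∀ x y z w, L x y z w = -L x y (J2 z) (J2 w))
    (hK2b : ∀ x y z w, L x y z w = -L (J2 x) (J2 y) z w)
    (hK3a : ∀ x y z w, L x y z w = -L x y (J3 z) (J3 w))
    (hK3b : ∀ x y z w, L x y z w = -L (J3 x) (J3 y) z w) :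
    ∀ x y z w, L x y z w = 0 := by
  have A2 := aux_neg_K V J2 L h2sq ha2 hBianchi hK2a hK2b
  have A3 := aux_neg_K V J3 L h3sq ha2 hBianchi hK3a hK3b
  have n1 : ∀ a b c d, L (-a) b c d = -L a b c d := by intro a b c d; have h := congrArg (fun f => f b c d) (L.map_add (-a) a); simp only [neg_add_cancel, map_zero, LinearMap.add_apply, LinearMap.zero_apply] at h; linarith
  -- J1 swap in the first pair (with a minus sign, since ε₁ = 1)
  have s11 : ∀ a b c d, L (J1 a) b c d = -L a (J1 b) c d := by
    intro a b c d
    have h := hK1b (J1 a) b c d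
    rw [h1sq, n1] at h
    linarith
  intro x y z w
  have k1 : L (J1 x) y (J1 z) w = L x y z w := by
    have h := A2 (J3 x) y (J3 z) w
    rw [h23, h23] at h
    have h' := A3 x y z w
    linarith
  have k2 : L (J1 y) x (J1 z) w = L y x z w := by
    have h := A2 (J3 y) x (J3 z) w
    rw [h23, h23] at h
    have h' := A3 y x z w
    linarith
  have m1 := s11 x y (J1 z) w
  have m2 := ha1 x (J1 y) (J1 z) w
  have m3 := ha1 x y z w
  linarith
end

section
/- Let Q(y,z) = ¼ Σ_{α=1}^{3} (∇_y Jα)(Jα z) on an almost (H,G)-manifold, and suppose the corresponding (0,3)-tensor satisfies Q(x,y,z) = ¼ Σα Fα(x, Jα y, z) where Fα(x,y,z) = g((∇_x Jα)y, z). Then the structure tensors can be recovered from Q by Fα(x,y,z) = -Q(x, Jα y, z) - εα Q(x, y, Jα z) for each α, where ε₁=1, ε₂=ε₃=-1, and consequently Q satisfies Q(x,y,z) + Σ_{α=1}^{3} εα Q(x, Jα y, Jα z) = 0. -/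
/-- With `Q(x,y,z) = ¼ Σα Fα(x, Jα y, z)` on an almost (H,G)-manifold, the structure
tensors are recovered via `Fα(x,y,z) = -Q(x,Jα y,z) - εα Q(x,y,Jα z)`, and consequently
`Q(x,y,z) + Σα εα Q(x,Jα y,Jα z) = 0`  (ε₁ = 1, ε₂ = ε₃ = -1). -/
theorem stmt_6 (V : Type*) [AddCommGroup V] [Module ℝ V]
    (g : V →ₗ[ℝ] V →ₗ[ℝ] ℝ) (J1 J2 J3 : V →ₗ[ℝ] V)
    (F1 F2 F3 : V →ₗ[ℝ] V →ₗ[ℝ] V →ₗ[ℝ] ℝ)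
    (hsym : ∀ x y, g x y = g y x)
    (h1sq : ∀ v, J1 (J1 v) = -v) (h2sq : ∀ v, J2 (J2 v) = -v) (h3sq : ∀ v, J3 (J3 v) = -v)
    (h23 : ∀ v, J2 (J3 v) = J1 v) (h32 : ∀ v, J3 (J2 v) = -J1 v)
    (h31 : ∀ v, J3 (J1 v) = J2 v) (h13 : ∀ v, J1 (J3 v) = -J2 v)
    (h12 : ∀ v, J1 (J2 v) = J3 v) (h21 : ∀ v, J2 (J1 v) = -J3 v)
    (hg1 : ∀ x y, g (J1 x) (J1 y) = g x y)
    (hg2 : ∀ x y, g (J2 x) (J2 y) = -g x y)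
    (hg3 : ∀ x y, g (J3 x) (J3 y) = -g x y)
    -- fundamental identities (3.4)
    (hF1a : ∀ x y z, F1 x y z = -F1 x z y)
    (hF1b : ∀ x y z, F1 x y z = -F1 x (J1 y) (J1 z))
    (hF1c : ∀ x y z, F1 x (J1 y) z = F1 x y (J1 z))
    (hF2a : ∀ x y z, F2 x y z = F2 x z y)
    (hF2b : ∀ x y z, F2 x y z = F2 x (J2 y) (J2 z))
    (hF2c : ∀ x y z, F2 x (J2 y) z = -F2 x y (J2 z))
    (hF3a : ∀ x y z, F3 x y z = F3 x z y)
    (hF3b : ∀ x y z, F3 x y z = F3 x (J3 y) (J3 z))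
    (hF3c : ∀ x y z, F3 x (J3 y) z = -F3 x y (J3 z))
    -- relations between the three structure tensors (cyclic)
    (hF123 : ∀ x y z, F1 x y z = F2 x (J3 y) z + F3 x y (J2 z))
    (hF231 : ∀ x y z, F2 x y z = F3 x (J1 y) z + F1 x y (J3 z))
    (hF312 : ∀ x y z, F3 x y z = F1 x (J2 y) z - F2 x y (J1 z))
    -- the potential Q of the natural connection D
    (Q : V → V → V → ℝ)
    (hQ : ∀ x y z, Q x y z = (1/4) * (F1 x (J1 y) z + F2 x (J2 y) z + F3 x (J3 y) z)) :
    (∀ x y z, F1 x y z = -Q x (J1 y) z - Q x y (J1 z)) ∧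
    (∀ x y z, F2 x y z = -Q x (J2 y) z + Q x y (J2 z)) ∧
    (∀ x y z, F3 x y z = -Q x (J3 y) z + Q x y (J3 z)) ∧
    (∀ x y z, Q x y z + Q x (J1 y) (J1 z) - Q x (J2 y) (J2 z) - Q x (J3 y) (J3 z) = 0) := by
  have P1 : ∀ x y z, F1 x y z = -Q x (J1 y) z - Q x y (J1 z) := by
    intro x y z
    have A := hF123 x y z
    have B := hF231 x y (J3 z)
    have C := hF3b x (J1 y) (J3 z)
    have D := hF1b x y z
    have E := hF2b x (J2 y) (J1 z)
    have Fh := hF3b x (J3 y) (J1 z)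
    simp only [hQ, h1sq, h2sq, h3sq, h12, h21, h13, h31, h23, h32, map_neg,
      LinearMap.neg_apply, neg_neg] at A B C D E Fh ⊢
    linarith
  have P2 : ∀ x y z, F2 x y z = -Q x (J2 y) z + Q x y (J2 z) := by
    intro x y z
    have A := hF231 x y z
    have B := hF312 x y (J1 z)
    have C := hF1b x (J2 y) (J1 z)
    have D := hF2b x y z
    have E := hF1b x (J1 y) (J2 z)
    have Fh := hF3b x (J3 y) (J2 z)
    simp only [hQ, h1sq, h2sq, h3sq, h12, h21, h13, h31, h23, h32, map_neg,
      LinearMap.neg_apply, neg_neg] at A B C D E Fh ⊢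
    linarith
  have P3 : ∀ x y z, F3 x y z = -Q x (J3 y) z + Q x y (J3 z) := by
    intro x y z
    have A := hF312 x y z
    have B := hF123 x y (J2 z)
    have C := hF2b x (J3 y) (J2 z)
    have D := hF3b x y z
    have E := hF1b x (J1 y) (J3 z)
    have Fh := hF2b x (J2 y) (J3 z)
    simp only [hQ, h1sq, h2sq, h3sq, h12, h21, h13, h31, h23, h32, map_neg,
      LinearMap.neg_apply, neg_neg] at A B C D E Fh ⊢
    linarith
  refine ⟨P1, P2, P3, ?_⟩
  intro x y z
  have n1 : Q x (-y) z = -Q x y z := by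
    rw [hQ, hQ]; simp only [map_neg, LinearMap.neg_apply]; ring
  have p1 := P1 x (J1 y) z
  have p2 := P2 x (J2 y) z
  have p3 := P3 x (J3 y) z
  simp only [h1sq, h2sq, h3sq] at p1 p2 p3
  rw [n1] at p1 p2 p3
  have q := hQ x y z
  linarith
end

section
/- On a W-manifold (locally conformal pseudo-hyper-Kähler manifold), with the structure tensors given by Fα(x,y,z) = (1/4n){εα g(x,y)θ(Jα z) - g(x,z)θ(Jα y) - εα g(Jα x, y)θ(z) + g(Jα x, z)θ(y)}, the torsion T(x,y,z) = Q(x,y,z) - Q(y,x,z) of the natural connection D (where Q(x,y,z) = ¼Σα Fα(x,Jα y,z)) satisfies T(x, y, Ω) = 0 for all x, y, where Ω is the Lee vector defined by θ = g(·, Ω). -/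
/-- On a W-manifold the torsion of the natural connection D annihilates the Lee vector:
T(x,y,Ω) = 0. -/
theorem stmt_7 (V : Type*) [AddCommGroup V] [Module ℝ V]
    (n : ℕ) (hn : 0 < n) [FiniteDimensional ℝ V] (hdim : Module.finrank ℝ V = 4 * n)
    (g : V →ₗ[ℝ] V →ₗ[ℝ] ℝ) (J1 J2 J3 : V →ₗ[ℝ] V)
    (θ : V → ℝ) (Ω : V) (hθ : ∀ x, θ x = g x Ω)
    (F1 F2 F3 : V → V → V → ℝ)
    (hsym : ∀ x y, g x y = g y x)
    (h1sq : ∀ v, J1 (J1 v) = -v) (h2sq : ∀ v, J2 (J2 v) = -v) (h3sq : ∀ v, J3 (J3 v) = -v)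
    (h23 : ∀ v, J2 (J3 v) = J1 v) (h32 : ∀ v, J3 (J2 v) = -J1 v)
    (h31 : ∀ v, J3 (J1 v) = J2 v) (h13 : ∀ v, J1 (J3 v) = -J2 v)
    (h12 : ∀ v, J1 (J2 v) = J3 v) (h21 : ∀ v, J2 (J1 v) = -J3 v)
    (hg1 : ∀ x y, g (J1 x) (J1 y) = g x y)
    (hg2 : ∀ x y, g (J2 x) (J2 y) = -g x y)
    (hg3 : ∀ x y, g (J3 x) (J3 y) = -g x y)
    -- the W-class form of the structure tensors (ε₁ = 1, ε₂ = ε₃ = -1)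
    (hF1 : ∀ x y z, F1 x y z = (1 / (4 * (n : ℝ))) *
      (g x y * θ (J1 z) - g x z * θ (J1 y) - g (J1 x) y * θ z + g (J1 x) z * θ y))
    (hF2 : ∀ x y z, F2 x y z = (1 / (4 * (n : ℝ))) *
      (-(g x y * θ (J2 z)) - g x z * θ (J2 y) + g (J2 x) y * θ z + g (J2 x) z * θ y))
    (hF3 : ∀ x y z, F3 x y z = (1 / (4 * (n : ℝ))) *
      (-(g x y * θ (J3 z)) - g x z * θ (J3 y) + g (J3 x) y * θ z + g (J3 x) z * θ y))
    (Q T : V → V → V → ℝ)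
    (hQ : ∀ x y z, Q x y z = (1/4) * (F1 x (J1 y) z + F2 x (J2 y) z + F3 x (J3 y) z))
    (hT : ∀ x y z, T x y z = Q x y z - Q y x z) :
    ∀ x y, T x y Ω = 0 := by
  intro x y
  have gJ1 : ∀ a b, g (J1 a) b = - g a (J1 b) := by
    intro a b
    have h := hg1 a (J1 b)
    rw [h1sq, map_neg] at h
    linarith
  have gJ2 : ∀ a b, g (J2 a) b = g a (J2 b) := by
    intro a b
    have := hg2 a (J2 b)
    rw [h2sq] at this
    simpa using this
  have gJ3 : ∀ a b, g (J3 a) b = g a (J3 b) := by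
    intro a b
    have := hg3 a (J3 b)
    rw [h3sq] at this
    simpa using this
  have z1 : g Ω (J1 Ω) = 0 := by
    have := gJ1 Ω Ω
    rw [hsym (J1 Ω) Ω] at this
    linarith
  simp only [hT, hQ, hF1, hF2, hF3, hθ, h1sq, h2sq, h3sq, map_neg,
    LinearMap.map_neg, LinearMap.neg_apply, hg1, hg2, hg3]
  simp only [gJ1, gJ2, gJ3, h1sq, h2sq, h3sq, map_neg, LinearMap.neg_apply]
  rw [z1, hsym y (J2 x), gJ2, hsym y (J3 x), gJ3, hsym y x]
  ring
end

section
/- On a W-manifold, the torsion tensor of the natural connection D has the explicit form T(x,y,z) = (1/16n){ -2g₁(x,y)θ(J₁z) + 3g(x,z)θ(y) - 3g(y,z)θ(x) + Σ_{α=1}^{3}[gα(x,z)θ(Jα y) - gα(y,z)θ(Jα x)] }, where gα(x,y) = g(Jα x, y), given that T(x,y,z) = Q(x,y,z) - Q(y,x,z) with Q(x,y,z) = ¼ Σα Fα(x, Jα y, z) and Fα given by the W-class formula. -/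
/-- On a W-manifold the torsion of the natural connection D has the explicit form (3.14). -/
theorem stmt_8 (V : Type*) [AddCommGroup V] [Module ℝ V]
    (n : ℕ) (hn : 0 < n) [FiniteDimensional ℝ V] (hdim : Module.finrank ℝ V = 4 * n)
    (g : V →ₗ[ℝ] V →ₗ[ℝ] ℝ) (J1 J2 J3 : V →ₗ[ℝ] V)
    (θ : V → ℝ) (Ω : V) (hθ : ∀ x, θ x = g x Ω)
    (F1 F2 F3 : V → V → V → ℝ)
    (hsym : ∀ x y, g x y = g y x)
    (h1sq : ∀ v, J1 (J1 v) = -v) (h2sq : ∀ v, J2 (J2 v) = -v) (h3sq : ∀ v, J3 (J3 v) = -v)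
    (h23 : ∀ v, J2 (J3 v) = J1 v) (h32 : ∀ v, J3 (J2 v) = -J1 v)
    (h31 : ∀ v, J3 (J1 v) = J2 v) (h13 : ∀ v, J1 (J3 v) = -J2 v)
    (h12 : ∀ v, J1 (J2 v) = J3 v) (h21 : ∀ v, J2 (J1 v) = -J3 v)
    (hg1 : ∀ x y, g (J1 x) (J1 y) = g x y)
    (hg2 : ∀ x y, g (J2 x) (J2 y) = -g x y)
    (hg3 : ∀ x y, g (J3 x) (J3 y) = -g x y)
    -- the W-class form of the structure tensors (ε₁ = 1, ε₂ = ε₃ = -1)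
    (hF1 : ∀ x y z, F1 x y z = (1 / (4 * (n : ℝ))) *
      (g x y * θ (J1 z) - g x z * θ (J1 y) - g (J1 x) y * θ z + g (J1 x) z * θ y))
    (hF2 : ∀ x y z, F2 x y z = (1 / (4 * (n : ℝ))) *
      (-(g x y * θ (J2 z)) - g x z * θ (J2 y) + g (J2 x) y * θ z + g (J2 x) z * θ y))
    (hF3 : ∀ x y z, F3 x y z = (1 / (4 * (n : ℝ))) *
      (-(g x y * θ (J3 z)) - g x z * θ (J3 y) + g (J3 x) y * θ z + g (J3 x) z * θ y))
    (Q T : V → V → V → ℝ)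
    (hQ : ∀ x y z, Q x y z = (1/4) * (F1 x (J1 y) z + F2 x (J2 y) z + F3 x (J3 y) z))
    (hT : ∀ x y z, T x y z = Q x y z - Q y x z) :
    ∀ x y z, T x y z = (1 / (16 * (n : ℝ))) *
      (-(2 * g (J1 x) y * θ (J1 z)) + 3 * g x z * θ y - 3 * g y z * θ x
        + g (J1 x) z * θ (J1 y) + g (J2 x) z * θ (J2 y) + g (J3 x) z * θ (J3 y)
        - g (J1 y) z * θ (J1 x) - g (J2 y) z * θ (J2 x) - g (J3 y) z * θ (J3 x)) := by

  intro x y z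
  have sk1 : ∀ a b : V, g a (J1 b) = -g (J1 a) b := by
    intro a b
    have := hg1 a (J1 b)
    rw [h1sq] at this
    simp at this
    linarith
  have sk2 : ∀ a b : V, g a (J2 b) = g (J2 a) b := by
    intro a b
    have := hg2 a (J2 b)
    rw [h2sq] at this
    simp at this
    linarith
  have sk3 : ∀ a b : V, g a (J3 b) = g (J3 a) b := by
    intro a b
    have := hg3 a (J3 b)
    rw [h3sq] at this
    simp at this
    linarith
  simp only [hT, hQ, hF1, hF2, hF3, hθ, h1sq, h2sq, h3sq, h12, h21, h13, h31, h23, h32,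
    sk1, sk2, sk3, map_neg, LinearMap.neg_apply, neg_neg]
  simp only [hsym x y, hsym x z, hsym y z, hsym x (J1 y), hsym x (J2 y), hsym x (J3 y),
    hsym y (J1 x), hsym y (J2 x), hsym y (J3 x), hsym z (J1 x), hsym z (J2 x), hsym z (J3 x),
    hsym z (J1 y), hsym z (J2 y), hsym z (J3 y)]
  have a1 : g (J1 y) x = -g (J1 x) y := by rw [← hsym, sk1]
  have a2 : g (J2 y) x = g (J2 x) y := by rw [← hsym, sk2]
  have a3 : g (J3 y) x = g (J3 x) y := by rw [← hsym, sk3]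
  rw [a1, a2, a3]
  ring
end

section
/- On a W-manifold, the square norms of ∇Jα are proportional to the square of the Lee vector: ‖∇Jα‖² = ((4n-1)εα - 1)/(4n²) · θ(Ω), for α = 1,2,3, where ‖∇Jα‖² = g^{ij} g^{kl} g((∇_i Jα)e_k, (∇_j Jα)e_l) is computed from the W-class formula for Fα. -/
section Aux

variable {V : Type*} [AddCommGroup V] [Module ℝ V]

private lemma sum_swap4 {α β γ δ : Type*} [Fintype α] [Fintype β] [Fintype γ] [Fintype δ]
    (f : α → β → γ → δ → ℝ) :
    ∑ i, ∑ j, ∑ k, ∑ l, f i j k l = ∑ k, ∑ l, ∑ i, ∑ j, f i j k l := by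
  calc ∑ i, ∑ j, ∑ k, ∑ l, f i j k l
      = ∑ i, ∑ k, ∑ j, ∑ l, f i j k l :=
        Finset.sum_congr rfl fun i _ => Finset.sum_comm
    _ = ∑ k, ∑ i, ∑ j, ∑ l, f i j k l := Finset.sum_comm
    _ = ∑ k, ∑ i, ∑ l, ∑ j, f i j k l :=
        Finset.sum_congr rfl fun k _ => Finset.sum_congr rfl fun i _ => Finset.sum_comm
    _ = ∑ k, ∑ l, ∑ i, ∑ j, f i j k l :=
        Finset.sum_congr rfl fun k _ => Finset.sum_comm

variable (g : V →ₗ[ℝ] V →ₗ[ℝ] ℝ) {N : ℕ} (e : Fin N → V) (G : Fin N → Fin N → ℝ)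

private lemma L2 (hsym : ∀ x y, g x y = g y x)
    (hspan : ∀ v : V, v ∈ Submodule.span ℝ (Set.range e))
    (hG : ∀ i j, (∑ k, g (e i) (e k) * G k j) = if i = j then (1 : ℝ) else 0)
    (u v : V) :
    (∑ k, ∑ l, G k l * g (e k) u * g (e l) v) = g u v := by
  induction hspan u using Submodule.span_induction with
  | mem x hx =>
    obtain ⟨m, rfl⟩ := hx
    have h1 : ∀ k l, G k l * g (e k) (e m) * g (e l) v
        = (g (e m) (e k) * G k l) * g (e l) v := by
      intro k l; rw [hsym (e k) (e m)]; ring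
    simp_rw [h1]
    rw [Finset.sum_comm]
    have h2 : ∀ l, (∑ k, (g (e m) (e k) * G k l) * g (e l) v)
        = (if m = l then (1:ℝ) else 0) * g (e l) v := by
      intro l
      rw [← Finset.sum_mul, hG m l]
    simp_rw [h2]
    simp
  | zero => simp
  | add x y hx hy ihx ihy =>
    have h1 : ∀ k l, G k l * g (e k) (x + y) * g (e l) v
        = G k l * g (e k) x * g (e l) v + G k l * g (e k) y * g (e l) v := by
      intro k l; rw [map_add]; ring
    simp_rw [h1, Finset.sum_add_distrib, ihx, ihy, map_add, LinearMap.add_apply]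
  | smul a x hx ih =>
    have h1 : ∀ k l, G k l * g (e k) (a • x) * g (e l) v
        = a * (G k l * g (e k) x * g (e l) v) := by
      intro k l; rw [map_smul, smul_eq_mul]; ring
    simp_rw [h1, ← Finset.mul_sum, ih, map_smul, LinearMap.smul_apply, smul_eq_mul]

private lemma Rlem (hsym : ∀ x y, g x y = g y x)
    (hspan : ∀ v : V, v ∈ Submodule.span ℝ (Set.range e))
    (hG : ∀ i j, (∑ k, g (e i) (e k) * G k j) = if i = j then (1 : ℝ) else 0)
    (v : V) :
    (∑ k, ∑ l, (G k l * g (e k) v) • e l) = v := by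
  induction hspan v using Submodule.span_induction with
  | mem x hx =>
    obtain ⟨m, rfl⟩ := hx
    rw [Finset.sum_comm]
    have h2 : ∀ l, (∑ k, (G k l * g (e k) (e m)) • e l)
        = (if m = l then (1:ℝ) else 0) • e l := by
      intro l
      rw [← Finset.sum_smul, ← hG m l]
      congr 1
      apply Finset.sum_congr rfl
      intro k _
      rw [hsym (e k) (e m)]; ring
    simp_rw [h2]
    simp
  | zero => simp
  | add x y hx hy ihx ihy =>
    have h1 : ∀ k l, (G k l * g (e k) (x + y)) • e l
        = (G k l * g (e k) x) • e l + (G k l * g (e k) y) • e l := by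
      intro k l; rw [map_add]; rw [mul_add, add_smul]
    simp_rw [h1, Finset.sum_add_distrib, ihx, ihy]
  | smul a x hx ih =>
    have h1 : ∀ k l, (G k l * g (e k) (a • x)) • e l
        = a • ((G k l * g (e k) x) • e l) := by
      intro k l; rw [map_smul, smul_eq_mul, smul_smul]
      congr 1
      ring
    simp_rw [h1, ← Finset.smul_sum, ih]


private lemma trId (hsym : ∀ x y, g x y = g y x)
    (hG : ∀ i j, (∑ k, g (e i) (e k) * G k j) = if i = j then (1 : ℝ) else 0) :
    (∑ i, ∑ j, G i j * g (e i) (e j)) = (N : ℝ) := by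
  have h1 : ∀ i j : Fin N, G i j * g (e i) (e j) = g (e j) (e i) * G i j := by
    intro i j; rw [hsym (e i) (e j)]; ring
  simp_rw [h1]
  rw [Finset.sum_comm]
  have h2 : ∀ j : Fin N, (∑ i, g (e j) (e i) * G i j) = 1 := by
    intro j; rw [hG j j]; simp
  simp_rw [h2]
  simp

private lemma trc (hsym : ∀ x y, g x y = g y x)
    (hspan : ∀ v : V, v ∈ Submodule.span ℝ (Set.range e))
    (hG : ∀ i j, (∑ k, g (e i) (e k) * G k j) = if i = j then (1 : ℝ) else 0)
    (A B : V →ₗ[ℝ] V) :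
    (∑ i, ∑ j, G i j * g (e i) (A (B (e j)))) = ∑ i, ∑ j, G i j * g (e i) (B (A (e j))) := by
  have expand : ∀ (A B : V →ₗ[ℝ] V) (i j : Fin N),
      g (e i) (A (B (e j))) = ∑ k, ∑ l, (G k l * g (e k) (B (e j))) * g (e i) (A (e l)) := by
    intro A B i j
    conv_lhs => rw [← Rlem g e G hsym hspan hG (B (e j))]
    simp only [map_sum, map_smul, smul_eq_mul]
  calc (∑ i, ∑ j, G i j * g (e i) (A (B (e j))))
      = ∑ i, ∑ j, ∑ k, ∑ l, G i j * ((G k l * g (e k) (B (e j))) * g (e i) (A (e l))) := by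
        apply Finset.sum_congr rfl; intro i _
        apply Finset.sum_congr rfl; intro j _
        rw [expand A B i j, Finset.mul_sum]
        apply Finset.sum_congr rfl; intro k _
        rw [Finset.mul_sum]
    _ = ∑ k, ∑ l, ∑ i, ∑ j, G i j * ((G k l * g (e k) (B (e j))) * g (e i) (A (e l))) :=
        sum_swap4 _
    _ = ∑ i, ∑ j, G i j * g (e i) (B (A (e j))) := by
        apply Finset.sum_congr rfl; intro i _
        apply Finset.sum_congr rfl; intro j _
        rw [expand B A i j, Finset.mul_sum]
        apply Finset.sum_congr rfl; intro k _
        rw [Finset.mul_sum]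
        apply Finset.sum_congr rfl; intro l _
        ring

private lemma CP (hsym : ∀ x y, g x y = g y x)
    (hspan : ∀ v : V, v ∈ Submodule.span ℝ (Set.range e))
    (hG : ∀ i j, (∑ k, g (e i) (e k) * G k j) = if i = j then (1 : ℝ) else 0)
    (s v s' v' : Fin 4 → V) :
    (∑ k, ∑ l, G k l * g (∑ m, g (e k) (s m) • v m) (∑ m', g (e l) (s' m') • v' m'))
      = ∑ m, ∑ m', g (s m) (s' m') * g (v m) (v' m') := by
  have step1 : ∀ k l, G k l * g (∑ m, g (e k) (s m) • v m) (∑ m', g (e l) (s' m') • v' m')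
      = ∑ m, ∑ m', (G k l * g (e k) (s m) * g (e l) (s' m')) * g (v m) (v' m') := by
    intro k l
    simp only [map_sum, map_smul, smul_eq_mul, LinearMap.coe_sum, Finset.sum_apply,
      LinearMap.smul_apply, Finset.mul_sum]
    rw [Finset.sum_comm]
    apply Finset.sum_congr rfl; intro m _
    apply Finset.sum_congr rfl; intro m' _
    ring
  simp_rw [step1]
  rw [sum_swap4 (fun k l m m' => (G k l * g (e k) (s m) * g (e l) (s' m')) * g (v m) (v' m'))]
  apply Finset.sum_congr rfl; intro m _
  apply Finset.sum_congr rfl; intro m' _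
  rw [← L2 g e G hsym hspan hG (s m) (s' m')]
  rw [Finset.sum_mul]
  apply Finset.sum_congr rfl; intro k _
  rw [Finset.sum_mul]

private def sfam (J : V →ₗ[ℝ] V) (ε : ℝ) (Ω x : V) : Fin 4 → V :=
  ![-x, ε • J Ω, (-ε) • J x, Ω]

private def vfam (J : V →ₗ[ℝ] V) (Ω x : V) : Fin 4 → V :=
  ![J Ω, x, Ω, J x]

private noncomputable def Uvec (g : V →ₗ[ℝ] V →ₗ[ℝ] ℝ) (J : V →ₗ[ℝ] V) (ε : ℝ) (Ω x y : V) :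
    V :=
  ∑ m, g y (sfam J ε Ω x m) • vfam J Ω x m

private lemma Uvec_def (J : V →ₗ[ℝ] V) (ε : ℝ) (Ω x y : V) :
    Uvec g J ε Ω x y = ∑ m, g y (sfam J ε Ω x m) • vfam J Ω x m := rfl

private lemma mainsum (hsym : ∀ x y, g x y = g y x)
    (hspan : ∀ v : V, v ∈ Submodule.span ℝ (Set.range e))
    (hG : ∀ i j, (∑ k, g (e i) (e k) * G k j) = if i = j then (1 : ℝ) else 0)
    (ε : ℝ) (hε : ε = 1 ∨ ε = -1)
    (J : V →ₗ[ℝ] V) (hJ2 : ∀ v, J (J v) = -v)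
    (hgJ : ∀ x y, g (J x) (J y) = ε * g x y)
    (htrJ : (∑ i, ∑ j, G i j * g (e i) (J (e j))) = 0) (Ω : V) :
    (∑ i, ∑ j, ∑ k, ∑ l, ∑ p, ∑ q, G i j * G k l * G p q *
        (ε * (g (e i) (e k) * g (J (e p)) Ω) - g (e i) (e p) * g (J (e k)) Ω
          - ε * (g (J (e i)) (e k) * g (e p) Ω) + g (J (e i)) (e p) * g (e k) Ω) *
        (ε * (g (e j) (e l) * g (J (e q)) Ω) - g (e j) (e q) * g (J (e l)) Ω
          - ε * (g (J (e j)) (e l) * g (e q) Ω) + g (J (e j)) (e q) * g (e l) Ω))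
      = (4 * ε * (N : ℝ) - 4 * ε - 4) * g Ω Ω := by
  have hswap : ∀ a b, g a (J b) = -(ε * g (J a) b) := by
    intro a b
    have h1 := hgJ a (J b)
    rw [hJ2 b, map_neg] at h1
    rcases hε with rfl | rfl
    · linear_combination -h1
    · linear_combination h1
  have hswap' : ∀ a b, g (J a) b = -(ε * g a (J b)) := by
    intro a b
    have h1 := hgJ a (J b)
    rw [hJ2 b, map_neg] at h1
    rcases hε with rfl | rfl
    · linear_combination -h1
    · linear_combination -h1
  have hTrep : ∀ x y z,
      (ε * (g x y * g (J z) Ω) - g x z * g (J y) Ω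
        - ε * (g (J x) y * g z Ω) + g (J x) z * g y Ω) = g z (Uvec g J ε Ω x y) := by
    intro x y z
    rw [hswap' z Ω, hswap' y Ω, hsym x y, hsym x z, hsym (J x) y, hsym (J x) z,
      Uvec_def g J ε Ω x y]
    simp only [sfam, vfam, Fin.sum_univ_four, Matrix.cons_val_zero, Matrix.cons_val_one,
      Matrix.head_cons, Matrix.cons_val_two, Matrix.tail_cons, Matrix.cons_val_three,
      map_neg, map_smul, smul_eq_mul, map_add, mul_neg, neg_mul]
    rcases hε with rfl | rfl <;> ring
  have innerval : ∀ x x',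
      (∑ m, ∑ m', g (sfam J ε Ω x m) (sfam J ε Ω x' m') * g (vfam J Ω x m) (vfam J Ω x' m'))
        = 4 * ε * (g Ω Ω * g x x') - 4 * ε * (g Ω x' * g x Ω)
          - 4 * (g (J Ω) Ω * g (J x) x') + 4 * (g (J Ω) x' * g (J x) Ω) := by
    intro x x'
    simp only [sfam, vfam, Fin.sum_univ_four, Matrix.cons_val_zero, Matrix.cons_val_one,
      Matrix.head_cons, Matrix.cons_val_two, Matrix.tail_cons, Matrix.cons_val_three,
      map_neg, map_smul, smul_eq_mul, LinearMap.neg_apply, LinearMap.smul_apply,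
      hswap, hJ2, neg_neg, mul_neg, neg_mul]
    rcases hε with rfl | rfl <;> ring
  have stage1 : (∑ i, ∑ j, ∑ k, ∑ l, ∑ p, ∑ q, G i j * G k l * G p q *
        (ε * (g (e i) (e k) * g (J (e p)) Ω) - g (e i) (e p) * g (J (e k)) Ω
          - ε * (g (J (e i)) (e k) * g (e p) Ω) + g (J (e i)) (e p) * g (e k) Ω) *
        (ε * (g (e j) (e l) * g (J (e q)) Ω) - g (e j) (e q) * g (J (e l)) Ω
          - ε * (g (J (e j)) (e l) * g (e q) Ω) + g (J (e j)) (e q) * g (e l) Ω))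
      = ∑ i, ∑ j, G i j * (∑ k, ∑ l, G k l *
          g (Uvec g J ε Ω (e i) (e k)) (Uvec g J ε Ω (e j) (e l))) := by
    apply Finset.sum_congr rfl; intro i _
    apply Finset.sum_congr rfl; intro j _
    rw [Finset.mul_sum]
    apply Finset.sum_congr rfl; intro k _
    rw [Finset.mul_sum]
    apply Finset.sum_congr rfl; intro l _
    rw [← L2 g e G hsym hspan hG (Uvec g J ε Ω (e i) (e k)) (Uvec g J ε Ω (e j) (e l))]
    simp only [Finset.mul_sum]
    apply Finset.sum_congr rfl; intro p _
    apply Finset.sum_congr rfl; intro q _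
    rw [← hTrep (e i) (e k) (e p), ← hTrep (e j) (e l) (e q)]
    ring
  have stage2 : ∀ i j : Fin N,
      (∑ k, ∑ l, G k l * g (Uvec g J ε Ω (e i) (e k)) (Uvec g J ε Ω (e j) (e l)))
        = 4 * ε * (g Ω Ω * g (e i) (e j)) - 4 * ε * (g Ω (e j) * g (e i) Ω)
          - 4 * (g (J Ω) Ω * g (J (e i)) (e j)) + 4 * (g (J Ω) (e j) * g (J (e i)) Ω) := by
    intro i j
    simp only [Uvec_def]
    rw [CP g e G hsym hspan hG (sfam J ε Ω (e i)) (vfam J Ω (e i))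
      (sfam J ε Ω (e j)) (vfam J Ω (e j))]
    exact innerval (e i) (e j)
  rw [stage1]
  simp_rw [stage2]
  have c1 := trId g e G hsym hG
  have c2 : (∑ i, ∑ j, G i j * (g Ω (e j) * g (e i) Ω)) = g Ω Ω := by
    have h : ∀ i j : Fin N, G i j * (g Ω (e j) * g (e i) Ω)
        = G i j * g (e i) Ω * g (e j) Ω := by
      intro i j; rw [hsym Ω (e j)]; ring
    simp_rw [h]
    exact L2 g e G hsym hspan hG Ω Ω
  have c3 : (∑ i, ∑ j, G i j * g (J (e i)) (e j)) = 0 := by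
    have h : ∀ i j : Fin N, G i j * g (J (e i)) (e j)
        = -ε * (G i j * g (e i) (J (e j))) := by
      intro i j; rw [hswap' (e i) (e j)]; ring
    simp_rw [h, ← Finset.mul_sum]
    rw [htrJ, mul_zero]
  have c4 : (∑ i, ∑ j, G i j * (g (J Ω) (e j) * g (J (e i)) Ω)) = -(ε * (ε * g Ω Ω)) := by
    have h : ∀ i j : Fin N, G i j * (g (J Ω) (e j) * g (J (e i)) Ω)
        = -ε * (G i j * g (e i) (J Ω) * g (e j) (J Ω)) := by
      intro i j; rw [hswap' (e i) Ω, hsym (J Ω) (e j)]; ring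
    simp_rw [h, ← Finset.mul_sum]
    rw [L2 g e G hsym hspan hG (J Ω) (J Ω), hgJ Ω Ω]
    ring
  have hsplit : ∀ i j : Fin N,
      G i j * (4 * ε * (g Ω Ω * g (e i) (e j)) - 4 * ε * (g Ω (e j) * g (e i) Ω)
        - 4 * (g (J Ω) Ω * g (J (e i)) (e j)) + 4 * (g (J Ω) (e j) * g (J (e i)) Ω))
      = (4 * ε * g Ω Ω) * (G i j * g (e i) (e j))
        + (-(4 * ε)) * (G i j * (g Ω (e j) * g (e i) Ω))
        + (-(4 * g (J Ω) Ω)) * (G i j * g (J (e i)) (e j))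
        + 4 * (G i j * (g (J Ω) (e j) * g (J (e i)) Ω)) := by
    intro i j; ring
  simp_rw [hsplit, Finset.sum_add_distrib, ← Finset.mul_sum]
  rw [c1, c2, c3, c4]
  rcases hε with rfl | rfl <;> ring

private lemma sum6_mul {N : ℕ} (c : ℝ) (f : Fin N → Fin N → Fin N → Fin N → Fin N → Fin N → ℝ) :
    (∑ i, ∑ j, ∑ k, ∑ l, ∑ p, ∑ q, c * f i j k l p q)
      = c * ∑ i, ∑ j, ∑ k, ∑ l, ∑ p, ∑ q, f i j k l p q := by
  simp only [Finset.mul_sum]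

private lemma sum6_congr {N : ℕ} (f h : Fin N → Fin N → Fin N → Fin N → Fin N → Fin N → ℝ)
    (hfh : ∀ i j k l p q, f i j k l p q = h i j k l p q) :
    (∑ i, ∑ j, ∑ k, ∑ l, ∑ p, ∑ q, f i j k l p q)
      = ∑ i, ∑ j, ∑ k, ∑ l, ∑ p, ∑ q, h i j k l p q := by
  apply Finset.sum_congr rfl; intro i _
  apply Finset.sum_congr rfl; intro j _
  apply Finset.sum_congr rfl; intro k _
  apply Finset.sum_congr rfl; intro l _
  apply Finset.sum_congr rfl; intro p _
  apply Finset.sum_congr rfl; intro q _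
  exact hfh i j k l p q

end Aux

/-- On a W-manifold the square norms of ∇Jα (computed from Fα via traces with the inverse
metric over a basis) are proportional to the square of the Lee vector:
‖∇Jα‖² = ((4n-1)εα - 1)/(4n²) · θ(Ω), for ε₁ = 1, ε₂ = ε₃ = -1. -/
theorem stmt_10 (V : Type*) [AddCommGroup V] [Module ℝ V]
    (n : ℕ) (hn : 0 < n) [FiniteDimensional ℝ V] (hdim : Module.finrank ℝ V = 4 * n)
    (g : V →ₗ[ℝ] V →ₗ[ℝ] ℝ) (J1 J2 J3 : V →ₗ[ℝ] V)
    (θ : V → ℝ) (Ω : V) (hθ : ∀ x, θ x = g x Ω)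
    (F1 F2 F3 : V → V → V → ℝ)
    (hsym : ∀ x y, g x y = g y x)
    (h1sq : ∀ v, J1 (J1 v) = -v) (h2sq : ∀ v, J2 (J2 v) = -v) (h3sq : ∀ v, J3 (J3 v) = -v)
    (h23 : ∀ v, J2 (J3 v) = J1 v) (h32 : ∀ v, J3 (J2 v) = -J1 v)
    (h31 : ∀ v, J3 (J1 v) = J2 v) (h13 : ∀ v, J1 (J3 v) = -J2 v)
    (h12 : ∀ v, J1 (J2 v) = J3 v) (h21 : ∀ v, J2 (J1 v) = -J3 v)
    (hg1 : ∀ x y, g (J1 x) (J1 y) = g x y)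
    (hg2 : ∀ x y, g (J2 x) (J2 y) = -g x y)
    (hg3 : ∀ x y, g (J3 x) (J3 y) = -g x y)
    -- the W-class form of the structure tensors (ε₁ = 1, ε₂ = ε₃ = -1)
    (hF1 : ∀ x y z, F1 x y z = (1 / (4 * (n : ℝ))) *
      (g x y * θ (J1 z) - g x z * θ (J1 y) - g (J1 x) y * θ z + g (J1 x) z * θ y))
    (hF2 : ∀ x y z, F2 x y z = (1 / (4 * (n : ℝ))) *
      (-(g x y * θ (J2 z)) - g x z * θ (J2 y) + g (J2 x) y * θ z + g (J2 x) z * θ y))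
    (hF3 : ∀ x y z, F3 x y z = (1 / (4 * (n : ℝ))) *
      (-(g x y * θ (J3 z)) - g x z * θ (J3 y) + g (J3 x) y * θ z + g (J3 x) z * θ y))
    -- a basis with inverse metric coefficients G
    (e : Fin (4 * n) → V) (G : Fin (4 * n) → Fin (4 * n) → ℝ)
    (hbasis : ∀ v : V, v ∈ Submodule.span ℝ (Set.range e))
    (hG : ∀ i j, (∑ k, g (e i) (e k) * G k j) = if i = j then (1 : ℝ) else 0) :
    (∑ i, ∑ j, ∑ k, ∑ l, ∑ p, ∑ q,
        G i j * G k l * G p q * F1 (e i) (e k) (e p) * F1 (e j) (e l) (e q))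
      = ((4 * (n : ℝ) - 1) * 1 - 1) / (4 * (n : ℝ) ^ 2) * θ Ω ∧
    (∑ i, ∑ j, ∑ k, ∑ l, ∑ p, ∑ q,
        G i j * G k l * G p q * F2 (e i) (e k) (e p) * F2 (e j) (e l) (e q))
      = ((4 * (n : ℝ) - 1) * (-1) - 1) / (4 * (n : ℝ) ^ 2) * θ Ω ∧
    (∑ i, ∑ j, ∑ k, ∑ l, ∑ p, ∑ q,
        G i j * G k l * G p q * F3 (e i) (e k) (e p) * F3 (e j) (e l) (e q))
      = ((4 * (n : ℝ) - 1) * (-1) - 1) / (4 * (n : ℝ) ^ 2) * θ Ω := by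
  have hn' : (n : ℝ) ≠ 0 := Nat.cast_ne_zero.mpr hn.ne'
  have hNcast : ((4 * n : ℕ) : ℝ) = 4 * (n : ℝ) := by push_cast; ring
  -- vanishing traces of J1, J2, J3
  have tau1 : (∑ i, ∑ j, G i j * g (e i) (J1 (e j))) = 0 := by
    have t := trc g e G hsym hbasis hG J2 J3
    simp_rw [h23, h32, map_neg, mul_neg, Finset.sum_neg_distrib] at t
    linarith
  have tau2 : (∑ i, ∑ j, G i j * g (e i) (J2 (e j))) = 0 := by
    have t := trc g e G hsym hbasis hG J3 J1
    simp_rw [h31, h13, map_neg, mul_neg, Finset.sum_neg_distrib] at t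
    linarith
  have tau3 : (∑ i, ∑ j, G i j * g (e i) (J3 (e j))) = 0 := by
    have t := trc g e G hsym hbasis hG J1 J2
    simp_rw [h12, h21, map_neg, mul_neg, Finset.sum_neg_distrib] at t
    linarith
  refine ⟨?_, ?_, ?_⟩
  · have M := mainsum g e G hsym hbasis hG 1 (Or.inl rfl) J1 h1sq
      (by intro x y; rw [hg1]; ring) tau1 Ω
    simp_rw [hF1, hθ]
    rw [sum6_congr _ (fun i j k l p q => (1 / (4 * (n : ℝ)))^2 * (G i j * G k l * G p q *
        (1 * (g (e i) (e k) * g (J1 (e p)) Ω) - g (e i) (e p) * g (J1 (e k)) Ω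
          - 1 * (g (J1 (e i)) (e k) * g (e p) Ω) + g (J1 (e i)) (e p) * g (e k) Ω) *
        (1 * (g (e j) (e l) * g (J1 (e q)) Ω) - g (e j) (e q) * g (J1 (e l)) Ω
          - 1 * (g (J1 (e j)) (e l) * g (e q) Ω) + g (J1 (e j)) (e q) * g (e l) Ω)))
      (by intro i j k l p q; ring)]
    rw [sum6_mul, M, hNcast]
    field_simp
  · have M := mainsum g e G hsym hbasis hG (-1) (Or.inr rfl) J2 h2sq
      (by intro x y; rw [hg2]; ring) tau2 Ω
    simp_rw [hF2, hθ]
    rw [sum6_congr _ (fun i j k l p q => (1 / (4 * (n : ℝ)))^2 * (G i j * G k l * G p q *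
        ((-1) * (g (e i) (e k) * g (J2 (e p)) Ω) - g (e i) (e p) * g (J2 (e k)) Ω
          - (-1) * (g (J2 (e i)) (e k) * g (e p) Ω) + g (J2 (e i)) (e p) * g (e k) Ω) *
        ((-1) * (g (e j) (e l) * g (J2 (e q)) Ω) - g (e j) (e q) * g (J2 (e l)) Ω
          - (-1) * (g (J2 (e j)) (e l) * g (e q) Ω) + g (J2 (e j)) (e q) * g (e l) Ω)))
      (by intro i j k l p q; ring)]
    rw [sum6_mul, M, hNcast]
    field_simp
    ring
  · have M := mainsum g e G hsym hbasis hG (-1) (Or.inr rfl) J3 h3sq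
      (by intro x y; rw [hg3]; ring) tau3 Ω
    simp_rw [hF3, hθ]
    rw [sum6_congr _ (fun i j k l p q => (1 / (4 * (n : ℝ)))^2 * (G i j * G k l * G p q *
        ((-1) * (g (e i) (e k) * g (J3 (e p)) Ω) - g (e i) (e p) * g (J3 (e k)) Ω
          - (-1) * (g (J3 (e i)) (e k) * g (e p) Ω) + g (J3 (e i)) (e p) * g (e k) Ω) *
        ((-1) * (g (e j) (e l) * g (J3 (e q)) Ω) - g (e j) (e q) * g (J3 (e l)) Ω
          - (-1) * (g (J3 (e j)) (e l) * g (e q) Ω) + g (J3 (e j)) (e q) * g (e l) Ω)))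
      (by intro i j k l p q; ring)]
    rw [sum6_mul, M, hNcast]
    field_simp
    ring
end

section
/- For the standard hypercomplex structure on ℝ⁴ (J₁X₁=X₂, J₁X₂=-X₁, J₁X₃=-X₄, J₁X₄=X₃; J₂X₁=X₃, J₂X₂=X₄, J₂X₃=-X₁, J₂X₄=-X₂; J₃X₁=-X₄, J₃X₂=X₃, J₃X₃=-X₂, J₃X₄=X₁) and the Lie bracket defined by [X₁,X₄]=[X₂,X₃]=λ₁X₁+λ₂X₂+λ₃X₃+λ₄X₄, [X₁,X₃]=-[X₂,X₄]=λ₂X₁-λ₁X₂+λ₄X₃-λ₃X₄, [X₁,X₂]=[X₃,X₄]=0, each Jα is an Abelian structure: [Jα x, Jα y] = [x, y] for all x, y and all α = 1,2,3. -/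
/-- For the standard hypercomplex structure on ℝ⁴ and the Lie bracket of the paper's
example, each Jα is an Abelian structure: [Jα x, Jα y] = [x,y]. -/
theorem stmt_13 (l1 l2 l3 l4 : ℝ)
    (X : Fin 4 → Fin 4 → ℝ) (hX : ∀ i, X i = Pi.single i 1)
    (J1 J2 J3 : (Fin 4 → ℝ) →ₗ[ℝ] (Fin 4 → ℝ))
    (hJ1 : J1 (X 0) = X 1 ∧ J1 (X 1) = -X 0 ∧ J1 (X 2) = -X 3 ∧ J1 (X 3) = X 2)
    (hJ2 : J2 (X 0) = X 2 ∧ J2 (X 1) = X 3 ∧ J2 (X 2) = -X 0 ∧ J2 (X 3) = -X 1)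
    (hJ3 : J3 (X 0) = -X 3 ∧ J3 (X 1) = X 2 ∧ J3 (X 2) = -X 1 ∧ J3 (X 3) = X 0)
    (B : (Fin 4 → ℝ) →ₗ[ℝ] (Fin 4 → ℝ) →ₗ[ℝ] (Fin 4 → ℝ))
    (hanti : ∀ x y, B x y = -B y x)
    (hB14 : B (X 0) (X 3) = l1 • X 0 + l2 • X 1 + l3 • X 2 + l4 • X 3)
    (hB23 : B (X 1) (X 2) = l1 • X 0 + l2 • X 1 + l3 • X 2 + l4 • X 3)
    (hB13 : B (X 0) (X 2) = l2 • X 0 - l1 • X 1 + l4 • X 2 - l3 • X 3)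
    (hB24 : B (X 1) (X 3) = -(l2 • X 0 - l1 • X 1 + l4 • X 2 - l3 • X 3))
    (hB12 : B (X 0) (X 1) = 0)
    (hB34 : B (X 2) (X 3) = 0) :
    (∀ x y, B (J1 x) (J1 y) = B x y) ∧
    (∀ x y, B (J2 x) (J2 y) = B x y) ∧
    (∀ x y, B (J3 x) (J3 y) = B x y) := by
  obtain ⟨h1a, h1b, h1c, h1d⟩ := hJ1
  obtain ⟨h2a, h2b, h2c, h2d⟩ := hJ2
  obtain ⟨h3a, h3b, h3c, h3d⟩ := hJ3
  have hdiag : ∀ v, B v v = 0 := by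
    intro v
    have h2 : B v v + B v v = 0 := by nth_rewrite 2 [hanti]; simp
    have : (2 : ℝ) • B v v = 0 := by rw [two_smul]; exact h2
    simpa using (smul_eq_zero.mp this).resolve_left (by norm_num)
  have hB21 : B (X 1) (X 0) = 0 := by rw [hanti, hB12, neg_zero]
  have hB31 : B (X 2) (X 0) = -B (X 0) (X 2) := by rw [hanti]
  have hB41 : B (X 3) (X 0) = -B (X 0) (X 3) := by rw [hanti]
  have hB32 : B (X 2) (X 1) = -B (X 1) (X 2) := by rw [hanti]
  have hB42 : B (X 3) (X 1) = -B (X 1) (X 3) := by rw [hanti]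
  have hB43 : B (X 3) (X 2) = 0 := by rw [hanti, hB34, neg_zero]
  have ext : ∀ J : (Fin 4 → ℝ) →ₗ[ℝ] (Fin 4 → ℝ),
      (∀ i j : Fin 4, B (J (X i)) (J (X j)) = B (X i) (X j)) →
      ∀ x y, B (J x) (J y) = B x y := by
    intro J h x y
    have key : (B.compl₁₂ J J) = B := by
      apply (Pi.basisFun ℝ (Fin 4)).ext
      intro i
      apply (Pi.basisFun ℝ (Fin 4)).ext
      intro j
      have hi : (Pi.basisFun ℝ (Fin 4)) i = X i := by rw [hX]; simp
      have hj : (Pi.basisFun ℝ (Fin 4)) j = X j := by rw [hX]; simp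
      simp only [LinearMap.compl₁₂_apply, hi, hj]
      exact h i j
    have := congrArg (fun L => L x y) key
    simpa using this
  refine ⟨ext J1 ?_, ext J2 ?_, ext J3 ?_⟩ <;>
    intro i j <;> fin_cases i <;> fin_cases j <;>
    simp [h1a, h1b, h1c, h1d, h2a, h2b, h2c, h2d, h3a, h3b, h3c, h3d,
      hB12, hB13, hB14, hB23, hB24, hB34, hB21, hB31, hB41, hB32, hB42, hB43, hdiag]
end

section
/- For the 4-dimensional Lie group example, the curvature tensor R(x,y)z = ∇_x∇_y z - ∇_y∇_x z - ∇_{[x,y]}z computed from the given connection components has R(X₁,X₂,X₂,X₁) = λ₁² + λ₂², R(X₁,X₃,X₃,X₁) = λ₄² - λ₂², R(X₃,X₄,X₄,X₃) = -λ₃² - λ₄², and the scalar curvature equals τ = 6(λ₁² + λ₂² - λ₃² - λ₄²). -/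
/-- For the 4-dimensional example, the curvature tensor of the Levi-Civita connection has
R(X₁,X₂,X₂,X₁)=λ₁²+λ₂², R(X₁,X₃,X₃,X₁)=λ₄²-λ₂², R(X₃,X₄,X₄,X₃)=-λ₃²-λ₄², and the
scalar curvature is τ = 6(λ₁²+λ₂²-λ₃²-λ₄²). -/
theorem stmt_16 (l1 l2 l3 l4 : ℝ)
    (X : Fin 4 → Fin 4 → ℝ) (hX : ∀ i, X i = Pi.single i 1)
    (B : (Fin 4 → ℝ) →ₗ[ℝ] (Fin 4 → ℝ) →ₗ[ℝ] (Fin 4 → ℝ))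
    (hanti : ∀ x y, B x y = -B y x)
    (hB14 : B (X 0) (X 3) = l1 • X 0 + l2 • X 1 + l3 • X 2 + l4 • X 3)
    (hB23 : B (X 1) (X 2) = l1 • X 0 + l2 • X 1 + l3 • X 2 + l4 • X 3)
    (hB13 : B (X 0) (X 2) = l2 • X 0 - l1 • X 1 + l4 • X 2 - l3 • X 3)
    (hB24 : B (X 1) (X 3) = -(l2 • X 0 - l1 • X 1 + l4 • X 2 - l3 • X 3))
    (hB12 : B (X 0) (X 1) = 0)
    (hB34 : B (X 2) (X 3) = 0)
    (g : (Fin 4 → ℝ) → (Fin 4 → ℝ) → ℝ)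
    (hg : ∀ x y, g x y = x 0 * y 0 + x 1 * y 1 - x 2 * y 2 - x 3 * y 3)
    (nab : (Fin 4 → ℝ) →ₗ[ℝ] (Fin 4 → ℝ) →ₗ[ℝ] (Fin 4 → ℝ))
    (hn00 : nab (X 0) (X 0) = l2 • X 2 + l1 • X 3)
    (hn11 : nab (X 1) (X 1) = l2 • X 2 + l1 • X 3)
    (hn02 : nab (X 0) (X 2) = l2 • X 0 - l3 • X 3)
    (hn31 : nab (X 3) (X 1) = l2 • X 0 - l3 • X 3)
    (hn03 : nab (X 0) (X 3) = l1 • X 0 + l3 • X 2)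
    (hn21 : nab (X 2) (X 1) = -(l1 • X 0 + l3 • X 2))
    (hn12 : nab (X 1) (X 2) = l2 • X 1 + l4 • X 3)
    (hn30 : nab (X 3) (X 0) = -(l2 • X 1 + l4 • X 3))
    (hn13 : nab (X 1) (X 3) = l1 • X 1 - l4 • X 2)
    (hn20 : nab (X 2) (X 0) = l1 • X 1 - l4 • X 2)
    (hn22 : nab (X 2) (X 2) = -(l4 • X 0) - l3 • X 1)
    (hn33 : nab (X 3) (X 3) = -(l4 • X 0) - l3 • X 1)
    (hn01 : nab (X 0) (X 1) = 0) (hn10 : nab (X 1) (X 0) = 0)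
    (hn23 : nab (X 2) (X 3) = 0) (hn32 : nab (X 3) (X 2) = 0)
    (R : (Fin 4 → ℝ) → (Fin 4 → ℝ) → (Fin 4 → ℝ) → (Fin 4 → ℝ))
    (hR : ∀ x y z, R x y z = nab x (nab y z) - nab y (nab x z) - nab (B x y) z)
    (eps : Fin 4 → ℝ) (heps : eps = ![1, 1, -1, -1]) :
    g (R (X 0) (X 1) (X 1)) (X 0) = l1 ^ 2 + l2 ^ 2 ∧
    g (R (X 0) (X 2) (X 2)) (X 0) = l4 ^ 2 - l2 ^ 2 ∧
    g (R (X 2) (X 3) (X 3)) (X 2) = -l3 ^ 2 - l4 ^ 2 ∧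
    (∑ i, ∑ j, eps i * eps j * g (R (X i) (X j) (X j)) (X i))
      = 6 * (l1 ^ 2 + l2 ^ 2 - l3 ^ 2 - l4 ^ 2) := by
  have hBxx : ∀ x, B x x = 0 := by
    intro x
    have h : B x x + B x x = 0 := by nth_rewrite 2 [hanti x x]; simp
    have h2 : (2:ℝ) • B x x = 0 := by rw [two_smul]; exact h
    simpa using h2
  have hB21 : B (X 1) (X 0) = 0 := by rw [hanti, hB12]; simp
  have hB31 : B (X 2) (X 0) = -(l2 • X 0 - l1 • X 1 + l4 • X 2 - l3 • X 3) := by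
    rw [hanti, hB13]
  have hB41 : B (X 3) (X 0) = -(l1 • X 0 + l2 • X 1 + l3 • X 2 + l4 • X 3) := by
    rw [hanti, hB14]
  have hB32 : B (X 2) (X 1) = -(l1 • X 0 + l2 • X 1 + l3 • X 2 + l4 • X 3) := by
    rw [hanti, hB23]
  have hB42 : B (X 3) (X 1) = l2 • X 0 - l1 • X 1 + l4 • X 2 - l3 • X 3 := by
    rw [hanti, hB24]; simp
  have hB43 : B (X 3) (X 2) = 0 := by rw [hanti, hB34]; simp
  have hz : ∀ i : Fin 4, g (R (X i) (X i) (X i)) (X i) = 0 := by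
    intro i
    rw [hR, hBxx, hg]
    simp
  have h01 : g (R (X 0) (X 1) (X 1)) (X 0) = l1 ^ 2+l2 ^ 2 := by
    rw [hR]
    simp only [hn00, hn11, hn02, hn31, hn03, hn21, hn12, hn30, hn13, hn20, hn22, hn33, hn01, hn10, hn23, hn32, hB12, hB13, hB14, hB23, hB24, hB34, hB21, hB31, hB41, hB32, hB42, hB43, map_add, map_sub, map_smul, map_neg, map_zero,
      LinearMap.zero_apply, LinearMap.add_apply, LinearMap.sub_apply, LinearMap.neg_apply,
      LinearMap.smul_apply, smul_zero, smul_add, smul_sub, smul_neg]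
    rw [hg]
    simp [hX, Pi.single_apply]
    ring
  have h02 : g (R (X 0) (X 2) (X 2)) (X 0) = l4 ^ 2-l2 ^ 2 := by
    rw [hR]
    simp only [hn00, hn11, hn02, hn31, hn03, hn21, hn12, hn30, hn13, hn20, hn22, hn33, hn01, hn10, hn23, hn32, hB12, hB13, hB14, hB23, hB24, hB34, hB21, hB31, hB41, hB32, hB42, hB43, map_add, map_sub, map_smul, map_neg, map_zero,
      LinearMap.zero_apply, LinearMap.add_apply, LinearMap.sub_apply, LinearMap.neg_apply,
      LinearMap.smul_apply, smul_zero, smul_add, smul_sub, smul_neg]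
    rw [hg]
    simp [hX, Pi.single_apply]
    ring
  have h03 : g (R (X 0) (X 3) (X 3)) (X 0) = l4 ^ 2-l1 ^ 2 := by
    rw [hR]
    simp only [hn00, hn11, hn02, hn31, hn03, hn21, hn12, hn30, hn13, hn20, hn22, hn33, hn01, hn10, hn23, hn32, hB12, hB13, hB14, hB23, hB24, hB34, hB21, hB31, hB41, hB32, hB42, hB43, map_add, map_sub, map_smul, map_neg, map_zero,
      LinearMap.zero_apply, LinearMap.add_apply, LinearMap.sub_apply, LinearMap.neg_apply,
      LinearMap.smul_apply, smul_zero, smul_add, smul_sub, smul_neg]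
    rw [hg]
    simp [hX, Pi.single_apply]
    ring
  have h10 : g (R (X 1) (X 0) (X 0)) (X 1) = l1 ^ 2+l2 ^ 2 := by
    rw [hR]
    simp only [hn00, hn11, hn02, hn31, hn03, hn21, hn12, hn30, hn13, hn20, hn22, hn33, hn01, hn10, hn23, hn32, hB12, hB13, hB14, hB23, hB24, hB34, hB21, hB31, hB41, hB32, hB42, hB43, map_add, map_sub, map_smul, map_neg, map_zero,
      LinearMap.zero_apply, LinearMap.add_apply, LinearMap.sub_apply, LinearMap.neg_apply,
      LinearMap.smul_apply, smul_zero, smul_add, smul_sub, smul_neg]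
    rw [hg]
    simp [hX, Pi.single_apply]
    ring
  have h12 : g (R (X 1) (X 2) (X 2)) (X 1) = l3 ^ 2-l2 ^ 2 := by
    rw [hR]
    simp only [hn00, hn11, hn02, hn31, hn03, hn21, hn12, hn30, hn13, hn20, hn22, hn33, hn01, hn10, hn23, hn32, hB12, hB13, hB14, hB23, hB24, hB34, hB21, hB31, hB41, hB32, hB42, hB43, map_add, map_sub, map_smul, map_neg, map_zero,
      LinearMap.zero_apply, LinearMap.add_apply, LinearMap.sub_apply, LinearMap.neg_apply,
      LinearMap.smul_apply, smul_zero, smul_add, smul_sub, smul_neg]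
    rw [hg]
    simp [hX, Pi.single_apply]
    ring
  have h13 : g (R (X 1) (X 3) (X 3)) (X 1) = l3 ^ 2-l1 ^ 2 := by
    rw [hR]
    simp only [hn00, hn11, hn02, hn31, hn03, hn21, hn12, hn30, hn13, hn20, hn22, hn33, hn01, hn10, hn23, hn32, hB12, hB13, hB14, hB23, hB24, hB34, hB21, hB31, hB41, hB32, hB42, hB43, map_add, map_sub, map_smul, map_neg, map_zero,
      LinearMap.zero_apply, LinearMap.add_apply, LinearMap.sub_apply, LinearMap.neg_apply,
      LinearMap.smul_apply, smul_zero, smul_add, smul_sub, smul_neg]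
    rw [hg]
    simp [hX, Pi.single_apply]
    ring
  have h20 : g (R (X 2) (X 0) (X 0)) (X 2) = l4 ^ 2-l2 ^ 2 := by
    rw [hR]
    simp only [hn00, hn11, hn02, hn31, hn03, hn21, hn12, hn30, hn13, hn20, hn22, hn33, hn01, hn10, hn23, hn32, hB12, hB13, hB14, hB23, hB24, hB34, hB21, hB31, hB41, hB32, hB42, hB43, map_add, map_sub, map_smul, map_neg, map_zero,
      LinearMap.zero_apply, LinearMap.add_apply, LinearMap.sub_apply, LinearMap.neg_apply,
      LinearMap.smul_apply, smul_zero, smul_add, smul_sub, smul_neg]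
    rw [hg]
    simp [hX, Pi.single_apply]
    ring
  have h21 : g (R (X 2) (X 1) (X 1)) (X 2) = l3 ^ 2-l2 ^ 2 := by
    rw [hR]
    simp only [hn00, hn11, hn02, hn31, hn03, hn21, hn12, hn30, hn13, hn20, hn22, hn33, hn01, hn10, hn23, hn32, hB12, hB13, hB14, hB23, hB24, hB34, hB21, hB31, hB41, hB32, hB42, hB43, map_add, map_sub, map_smul, map_neg, map_zero,
      LinearMap.zero_apply, LinearMap.add_apply, LinearMap.sub_apply, LinearMap.neg_apply,
      LinearMap.smul_apply, smul_zero, smul_add, smul_sub, smul_neg]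
    rw [hg]
    simp [hX, Pi.single_apply]
    ring
  have h23 : g (R (X 2) (X 3) (X 3)) (X 2) = -l3 ^ 2-l4 ^ 2 := by
    rw [hR]
    simp only [hn00, hn11, hn02, hn31, hn03, hn21, hn12, hn30, hn13, hn20, hn22, hn33, hn01, hn10, hn23, hn32, hB12, hB13, hB14, hB23, hB24, hB34, hB21, hB31, hB41, hB32, hB42, hB43, map_add, map_sub, map_smul, map_neg, map_zero,
      LinearMap.zero_apply, LinearMap.add_apply, LinearMap.sub_apply, LinearMap.neg_apply,
      LinearMap.smul_apply, smul_zero, smul_add, smul_sub, smul_neg]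
    rw [hg]
    simp [hX, Pi.single_apply]
    ring
  have h30 : g (R (X 3) (X 0) (X 0)) (X 3) = l4 ^ 2-l1 ^ 2 := by
    rw [hR]
    simp only [hn00, hn11, hn02, hn31, hn03, hn21, hn12, hn30, hn13, hn20, hn22, hn33, hn01, hn10, hn23, hn32, hB12, hB13, hB14, hB23, hB24, hB34, hB21, hB31, hB41, hB32, hB42, hB43, map_add, map_sub, map_smul, map_neg, map_zero,
      LinearMap.zero_apply, LinearMap.add_apply, LinearMap.sub_apply, LinearMap.neg_apply,
      LinearMap.smul_apply, smul_zero, smul_add, smul_sub, smul_neg]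
    rw [hg]
    simp [hX, Pi.single_apply]
    ring
  have h31 : g (R (X 3) (X 1) (X 1)) (X 3) = l3 ^ 2-l1 ^ 2 := by
    rw [hR]
    simp only [hn00, hn11, hn02, hn31, hn03, hn21, hn12, hn30, hn13, hn20, hn22, hn33, hn01, hn10, hn23, hn32, hB12, hB13, hB14, hB23, hB24, hB34, hB21, hB31, hB41, hB32, hB42, hB43, map_add, map_sub, map_smul, map_neg, map_zero,
      LinearMap.zero_apply, LinearMap.add_apply, LinearMap.sub_apply, LinearMap.neg_apply,
      LinearMap.smul_apply, smul_zero, smul_add, smul_sub, smul_neg]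
    rw [hg]
    simp [hX, Pi.single_apply]
    ring
  have h32 : g (R (X 3) (X 2) (X 2)) (X 3) = -l3 ^ 2-l4 ^ 2 := by
    rw [hR]
    simp only [hn00, hn11, hn02, hn31, hn03, hn21, hn12, hn30, hn13, hn20, hn22, hn33, hn01, hn10, hn23, hn32, hB12, hB13, hB14, hB23, hB24, hB34, hB21, hB31, hB41, hB32, hB42, hB43, map_add, map_sub, map_smul, map_neg, map_zero,
      LinearMap.zero_apply, LinearMap.add_apply, LinearMap.sub_apply, LinearMap.neg_apply,
      LinearMap.smul_apply, smul_zero, smul_add, smul_sub, smul_neg]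
    rw [hg]
    simp [hX, Pi.single_apply]
    ring
  refine ⟨h01, h02, h23, ?_⟩
  simp only [heps, Fin.sum_univ_four, hz, h01, h02, h03, h10, h12, h13, h20, h21, h23, h30, h31, h32,
    Matrix.cons_val_zero, Matrix.cons_val_one, Matrix.head_cons, Matrix.cons_val_two,
    Matrix.tail_cons, Matrix.cons_val_three]
  ring
end

section
/- For the 4-dimensional Lie group example, the connection D defined by D_{X1}Xj = -½λ₃ J₁Xj·(sign convention as given): D_{X1}X1=-½λ₃X₂, D_{X1}X2=½λ₃X₁, D_{X1}X3=-½λ₃X₄, D_{X1}X4=½λ₃X₃, D_{X2}X1=½λ₄X₂, D_{X2}X2=-½λ₄X₁, D_{X2}X3=½λ₄X₄, D_{X2}X4=-½λ₄X₃, D_{X3}X1=½λ₁X₂, D_{X3}X2=-½λ₁X₁, D_{X3}X3=½λ₁X₄, D_{X3}X4=-½λ₁X₃, D_{X4}X1=-½λ₂X₂, D_{X4}X2=½λ₂X₁, D_{X4}X3=-½λ₂X₄, D_{X4}X4=½λ₂X₃, has vanishing curvature: K(x,y)z = D_xD_yz - D_yD_xz - D_{[x,y]}z = 0 for all basis vectors.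 -/
theorem finmk2 (h : 2 < 4) : (⟨2, h⟩ : Fin 4) = 2 := rfl
theorem finmk3 (h : 3 < 4) : (⟨3, h⟩ : Fin 4) = 3 := rfl

/-- For the 4-dimensional example, the natural connection D given by the displayed
components is flat: K(x,y)z = D_x D_y z - D_y D_x z - D_{[x,y]} z = 0 on basis vectors. -/
theorem stmt_17 (l1 l2 l3 l4 : ℝ)
    (X : Fin 4 → Fin 4 → ℝ) (hX : ∀ i, X i = Pi.single i 1)
    (B : (Fin 4 → ℝ) →ₗ[ℝ] (Fin 4 → ℝ) →ₗ[ℝ] (Fin 4 → ℝ))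
    (hanti : ∀ x y, B x y = -B y x)
    (hB14 : B (X 0) (X 3) = l1 • X 0 + l2 • X 1 + l3 • X 2 + l4 • X 3)
    (hB23 : B (X 1) (X 2) = l1 • X 0 + l2 • X 1 + l3 • X 2 + l4 • X 3)
    (hB13 : B (X 0) (X 2) = l2 • X 0 - l1 • X 1 + l4 • X 2 - l3 • X 3)
    (hB24 : B (X 1) (X 3) = -(l2 • X 0 - l1 • X 1 + l4 • X 2 - l3 • X 3))
    (hB12 : B (X 0) (X 1) = 0)
    (hB34 : B (X 2) (X 3) = 0)
    (D : (Fin 4 → ℝ) →ₗ[ℝ] (Fin 4 → ℝ) →ₗ[ℝ] (Fin 4 → ℝ))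
    (hD00 : D (X 0) (X 0) = -((1/2) * l3) • X 1)
    (hD01 : D (X 0) (X 1) = ((1/2) * l3) • X 0)
    (hD02 : D (X 0) (X 2) = -((1/2) * l3) • X 3)
    (hD03 : D (X 0) (X 3) = ((1/2) * l3) • X 2)
    (hD10 : D (X 1) (X 0) = ((1/2) * l4) • X 1)
    (hD11 : D (X 1) (X 1) = -((1/2) * l4) • X 0)
    (hD12 : D (X 1) (X 2) = ((1/2) * l4) • X 3)
    (hD13 : D (X 1) (X 3) = -((1/2) * l4) • X 2)
    (hD20 : D (X 2) (X 0) = ((1/2) * l1) • X 1)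
    (hD21 : D (X 2) (X 1) = -((1/2) * l1) • X 0)
    (hD22 : D (X 2) (X 2) = ((1/2) * l1) • X 3)
    (hD23 : D (X 2) (X 3) = -((1/2) * l1) • X 2)
    (hD30 : D (X 3) (X 0) = -((1/2) * l2) • X 1)
    (hD31 : D (X 3) (X 1) = ((1/2) * l2) • X 0)
    (hD32 : D (X 3) (X 2) = -((1/2) * l2) • X 3)
    (hD33 : D (X 3) (X 3) = ((1/2) * l2) • X 2) :
    ∀ i j k, D (X i) (D (X j) (X k)) - D (X j) (D (X i) (X k)) - D (B (X i) (X j)) (X k) = 0 := by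
  have hBii : ∀ x, B x x = 0 := by
    intro x
    have h := hanti x x
    have h2 : (2:ℝ) • B x x = 0 := by
      rw [two_smul]; nth_rewrite 2 [h]; simp
    simpa using h2
  have hB00 := hBii (X 0)
  have hB11 := hBii (X 1)
  have hB22 := hBii (X 2)
  have hB33 := hBii (X 3)
  have hB21 : B (X 1) (X 0) = -B (X 0) (X 1) := hanti _ _
  have hB31 : B (X 2) (X 0) = -B (X 0) (X 2) := hanti _ _
  have hB41 : B (X 3) (X 0) = -B (X 0) (X 3) := hanti _ _
  have hB32 : B (X 2) (X 1) = -B (X 1) (X 2) := hanti _ _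
  have hB42 : B (X 3) (X 1) = -B (X 1) (X 3) := hanti _ _
  have hB43 : B (X 3) (X 2) = -B (X 2) (X 3) := hanti _ _
  intro i j k
  fin_cases i <;> fin_cases j <;> fin_cases k <;>
    simp only [Fin.mk_zero, Fin.mk_one, finmk2, finmk3, Fin.isValue, hB21, hB31, hB41, hB32, hB42, hB43, hB00, hB11, hB22, hB33,
      hB12, hB13, hB14, hB23, hB24, hB34, map_add, map_smul, map_neg, map_sub, map_zero,
      LinearMap.add_apply, LinearMap.smul_apply, LinearMap.neg_apply, LinearMap.sub_apply,
      LinearMap.zero_apply,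
      hD00, hD01, hD02, hD03, hD10, hD11, hD12, hD13, hD20, hD21, hD22, hD23,
      hD30, hD31, hD32, hD33] <;>
    module
end
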